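/- The k-retrospective ranking is non-increasing along G'-edges: if (u,v) ∈ E' then r^k(u) ≥ r^k(v). -/

import Mathlib

/-- Strict lexicographic order on finite 0-1 profiles. -/
def ProfLt (a b : List Bool) : Prop := List.Lex (· < ·) a b

/-- Non-strict lexicographic order on finite 0-1 profiles. -/
def ProfLe (a b : List Bool) : Prop := a = b ∨ ProfLt a b

/-- A nondeterministic Büchi automaton on infinite words. -/
structure NBW (Q : Type) (σ : Type) where
  init : Set Q
  trans : Q → σ → Set Q
  acc : Q → Bool

namespace NBW

variable {Q σ : Type} (A : NBW Q σ) (w : ℕ → σ)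

/-- `(q,i)` is a vertex of the run DAG of `A` on `w`. -/
def InDag (v : Q × ℕ) : Prop :=
  ∃ p : ℕ → Q, p 0 ∈ A.init ∧ (∀ j, j < v.2 → p (j + 1) ∈ A.trans (p j) (w j)) ∧ p v.2 = v.1

/-- Edge of the run DAG. -/
def Edge (u v : Q × ℕ) : Prop :=
  A.InDag w u ∧ v.2 = u.2 + 1 ∧ v.1 ∈ A.trans u.1 (w u.2)

/-- An infinite initial path through the (sub-)DAG with edge relation `E`. -/
def IsPath (E : Q × ℕ → Q × ℕ → Prop) (π : ℕ → Q × ℕ) : Prop :=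
  (π 0).1 ∈ A.init ∧ (π 0).2 = 0 ∧ ∀ i, E (π i) (π (i + 1))

/-- An accepting path: initial and visiting F-nodes infinitely often. -/
def AcceptingPath (E : Q × ℕ → Q × ℕ → Prop) (π : ℕ → Q × ℕ) : Prop :=
  A.IsPath E π ∧ ∀ N, ∃ i, N ≤ i ∧ A.acc (π i).1 = true

/-- Profile (sequence of acceptance labels) of the first `i+1` states of `p`. -/
def profileOf (p : ℕ → Q) (i : ℕ) : List Bool :=
  (List.range (i + 1)).map fun j => A.acc (p j)

/-- `p` encodes a finite initial run ending at node `v`. -/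
def FinRunTo (p : ℕ → Q) (v : Q × ℕ) : Prop :=
  p 0 ∈ A.init ∧ (∀ j, j < v.2 → p (j + 1) ∈ A.trans (p j) (w j)) ∧ p v.2 = v.1

/-- `h` assigns to each node the lexicographically maximal profile
over all finite initial runs to it. -/
def IsProfileFun (h : Q × ℕ → List Bool) : Prop :=
  ∀ v, A.InDag w v →
    (∃ p, A.FinRunTo w p v ∧ A.profileOf p v.2 = h v) ∧
    ∀ p, A.FinRunTo w p v → ProfLe (A.profileOf p v.2) (h v)

/-- Edges of the pruned DAG `G'`: only edges from predecessors of
lexicographically maximal profile are kept. -/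
def Edge' (h : Q × ℕ → List Bool) (u v : Q × ℕ) : Prop :=
  A.Edge w u v ∧ ∀ u', A.Edge w u' v → ¬ ProfLt (h u) (h u')

/-- `v` is finite in `G'`: it has finitely many descendants in `G'`. -/
def FiniteIn' (h : Q × ℕ → List Bool) (v : Q × ℕ) : Prop :=
  Set.Finite {u | Relation.ReflTransGen (A.Edge' w h) v u}

/-- Vertices of `G''`: vertices of the run DAG that are not finite in `G'`. -/
def InDag'' (h : Q × ℕ → List Bool) (v : Q × ℕ) : Prop :=
  A.InDag w v ∧ ¬ A.FiniteIn' w h v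

/-- Edges of `G''`. -/
def Edge'' (h : Q × ℕ → List Bool) (u v : Q × ℕ) : Prop :=
  A.Edge' w h u v ∧ A.InDag'' w h u ∧ A.InDag'' w h v

/-- `lam` is the retrospective labeling `λ^k`: ⊤ at levels ≤ k, ⊥ on F-nodes
after level k, inherited along `G'`-edges otherwise. -/
def IsRetroLabeling (h : Q × ℕ → List Bool) (k : ℕ) (lam : Q × ℕ → Bool) : Prop :=
  (∀ u, A.InDag w u → u.2 ≤ k → lam u = true) ∧
  (∀ u, A.InDag w u → k < u.2 → A.acc u.1 = true → lam u = false) ∧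
  (∀ u v, k < v.2 → A.acc v.1 = false → A.Edge' w h u v → lam v = lam u)

/-- A labeling is legal when every ⊥-labeled node is finite in `G'`. -/
def Legal (h : Q × ℕ → List Bool) (lam : Q × ℕ → Bool) : Prop :=
  ∀ u, A.InDag w u → lam u = false → A.FiniteIn' w h u

/-- `α(u)`: the number of ⊤-labeled profile-equivalence classes on `u`'s level
whose profile is strictly greater than `h u`. -/
noncomputable def alphaCount (h : Q × ℕ → List Bool) (lam : Q × ℕ → Bool) (u : Q × ℕ) : ℕ :=
  Set.ncard {p : List Bool | ∃ v, A.InDag w v ∧ v.2 = u.2 ∧ lam v = true ∧ h v = p ∧ ProfLt (h u) p}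

/-- The `k`-retrospective ranking (with top rank `m`). -/
noncomputable def retroRank (h : Q × ℕ → List Bool) (lam : Q × ℕ → Bool) (k m : ℕ)
    (u : Q × ℕ) : ℕ :=
  if u.2 ≤ k then m
  else if lam u then 2 * A.alphaCount w h lam u + 1 else 2 * A.alphaCount w h lam u

/-- `m = 2 |Q \ F|`. -/
def mBound [Fintype Q] : ℕ :=
  2 * Finset.card (Finset.univ.filter fun q => A.acc q = false)

end NBW

section Aux

open NBW

variable {Q σ : Type} {A : NBW Q σ} {w : ℕ → σ} {h : Q × ℕ → List Bool}

lemma profLt_trichot (a b : List Bool) : ProfLt a b ∨ a = b ∨ ProfLt b a :=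
  trichotomous_of (List.Lex (· < ·)) a b

lemma profLt_asymm {a b : List Bool} (h1 : ProfLt a b) (h2 : ProfLt b a) : False :=
  asymm_of (List.Lex (· < ·)) h1 h2

lemma profLe_antisymm {a b : List Bool} (h1 : ProfLe a b) (h2 : ProfLe b a) : a = b := by
  rcases h1 with rfl | h1
  · rfl
  · rcases h2 with rfl | h2
    · rfl
    · exact (profLt_asymm h1 h2).elim

lemma lex_append {a b : List Bool} (s t : List Bool) (hlen : a.length = b.length)
    (hab : ProfLt a b) : ProfLt (a ++ s) (b ++ t) := by
  induction a generalizing b with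
  | nil =>
    cases b with
    | nil => exact absurd hab (List.not_lex_nil)
    | cons y b' => simp at hlen
  | cons x a' ih =>
    cases b with
    | nil => simp at hlen
    | cons y b' =>
      cases hab with
      | rel hr => exact List.Lex.rel hr
      | cons htail => exact List.Lex.cons (ih (by simpa using hlen) htail)

lemma lex_concat_iff {a b : List Bool} {x y : Bool} (hlen : a.length = b.length) :
    ProfLt (a ++ [x]) (b ++ [y]) ↔ ProfLt a b ∨ (a = b ∧ x < y) := by
  constructor
  · intro hlex
    induction a generalizing b with
    | nil =>
      cases b with
      | nil => exact Or.inr ⟨rfl, (List.lex_singleton_iff _ _).1 hlex⟩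
      | cons y b' => simp at hlen
    | cons c a' ih =>
      cases b with
      | nil => simp at hlen
      | cons d b' =>
        cases hlex with
        | rel hr => exact Or.inl (List.Lex.rel hr)
        | cons htail =>
          rcases ih (by simpa using hlen) htail with h2 | ⟨rfl, hxy⟩
          · exact Or.inl (List.Lex.cons h2)
          · exact Or.inr ⟨rfl, hxy⟩
  · rintro (h2 | ⟨rfl, hxy⟩)
    · exact lex_append _ _ hlen h2
    · exact List.Lex.append_left _ ((List.lex_singleton_iff _ _).2 hxy) a

lemma profLe_concat {a b : List Bool} (x : Bool) (hlen : a.length = b.length)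
    (hab : ProfLe a b) : ProfLe (a ++ [x]) (b ++ [x]) := by
  rcases hab with rfl | h2
  · exact Or.inl rfl
  · exact Or.inr (lex_append _ _ hlen h2)

lemma profileOf_len (A : NBW Q σ) (p : ℕ → Q) (i : ℕ) : (A.profileOf p i).length = i + 1 := by
  simp [NBW.profileOf]

lemma h_len (hprof : A.IsProfileFun w h) {v : Q × ℕ} (hv : A.InDag w v) :
    (h v).length = v.2 + 1 := by
  obtain ⟨⟨p, _, hpv⟩, _⟩ := hprof v hv
  rw [← hpv, profileOf_len]

lemma profileOf_congr {p q : ℕ → Q} {i : ℕ} (hpq : ∀ j ≤ i, p j = q j) :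
    A.profileOf p i = A.profileOf q i := by
  simp only [NBW.profileOf]
  apply List.map_congr_left
  intro j hj
  rw [hpq j (by simpa [Nat.lt_succ_iff] using hj)]

lemma profileOf_succ (p : ℕ → Q) (i : ℕ) :
    A.profileOf p (i + 1) = A.profileOf p i ++ [A.acc (p (i + 1))] := by
  simp only [NBW.profileOf]
  rw [List.range_succ, List.map_append]
  rfl

/-- Extend a finite run to `u` along an edge `(u,v)` to a finite run to `v`. -/
lemma extend_run {u v : Q × ℕ} (he : A.Edge w u v) {p : ℕ → Q} (hp : A.FinRunTo w p u) :
    A.FinRunTo w (fun j => if j ≤ u.2 then p j else v.1) v ∧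
    A.profileOf (fun j => if j ≤ u.2 then p j else v.1) v.2
      = A.profileOf p u.2 ++ [A.acc v.1] := by
  obtain ⟨_, hv2, htr⟩ := he
  obtain ⟨hp0, hptr, hpu⟩ := hp
  constructor
  · refine ⟨by simpa using hp0, ?_, ?_⟩
    · intro j hj
      rw [hv2] at hj
      rcases Nat.lt_succ_iff_lt_or_eq.1 hj with hj' | rfl
      · have h1 : j ≤ u.2 := hj'.le
        have h2 : j + 1 ≤ u.2 := hj'
        simp only [h1, h2, if_pos]
        exact hptr j hj'
      · simp only [le_refl, if_pos, Nat.not_succ_le_self, if_neg]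
        rw [hpu]; exact htr
    · simp [hv2]
  · rw [hv2, profileOf_succ]
    simp only [Nat.not_succ_le_self, if_neg]
    congr 1
    apply profileOf_congr
    intro j hj
    simp [hj]

lemma inDag_of_edge_right {u v : Q × ℕ} (he : A.Edge w u v) : A.InDag w v := by
  obtain ⟨p, hp⟩ := he.1
  have hp' : A.FinRunTo w p u := hp
  obtain ⟨hr, -⟩ := extend_run he hp'
  exact ⟨fun j => if j ≤ u.2 then p j else v.1, hr.1, hr.2.1, hr.2.2⟩

/-- Profile along a pruned edge: `h v = h u ++ [acc v.1]`. -/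
lemma h_edge' (hprof : A.IsProfileFun w h) {u v : Q × ℕ} (huv : A.Edge' w h u v) :
    h v = h u ++ [A.acc v.1] := by
  obtain ⟨he, hmax⟩ := huv
  have hu : A.InDag w u := he.1
  have hv : A.InDag w v := inDag_of_edge_right he
  have hv2 : v.2 = u.2 + 1 := he.2.1
  -- h u ++ [acc v] ≤ h v
  obtain ⟨⟨p, hp, hpu⟩, _⟩ := hprof u hu
  obtain ⟨hrun, hprofeq⟩ := extend_run he hp
  have hle1 : ProfLe (h u ++ [A.acc v.1]) (h v) := by
    have := (hprof v hv).2 _ hrun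
    rwa [hprofeq, hpu] at this
  -- h v ≤ h u ++ [acc v]
  obtain ⟨⟨q, hq, hqv⟩, _⟩ := hprof v hv
  have hqtr := hq.2.1
  set u' : Q × ℕ := (q u.2, u.2) with hu'def
  have hq' : A.FinRunTo w q u' := by
    refine ⟨hq.1, ?_, rfl⟩
    intro j hj
    have hj' : j < u.2 := hj
    exact hq.2.1 j (by omega)
  have hu'dag : A.InDag w u' := ⟨q, hq'⟩
  have he' : A.Edge w u' v := by
    refine ⟨hu'dag, hv2, ?_⟩
    have := hq.2.1 u.2 (by omega)
    rw [show u.2 + 1 = v.2 by omega, hq.2.2] at this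
    exact this
  have hle2 : ProfLe (A.profileOf q u.2) (h u') := (hprof u' hu'dag).2 q hq'
  have hle3 : ProfLe (h u') (h u) := by
    rcases profLt_trichot (h u') (h u) with h1 | h1 | h1
    · exact Or.inr h1
    · exact Or.inl h1
    · exact absurd h1 (hmax u' he')
  have hqsplit : A.profileOf q v.2 = A.profileOf q u.2 ++ [A.acc v.1] := by
    rw [hv2]
    simp only [NBW.profileOf, List.range_succ, List.map_append]
    congr 1
    simp only [List.map_cons, List.map_nil]
    rw [show u.2 + 1 = v.2 by omega, hq.2.2]
  have hlen1 : (A.profileOf q u.2).length = (h u').length := by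
    rw [profileOf_len, h_len hprof hu'dag]
  have hlen2 : (h u').length = (h u).length := by
    rw [h_len hprof hu'dag, h_len hprof hu]
  have hle4 : ProfLe (h v) (h u ++ [A.acc v.1]) := by
    rw [← hqv, hqsplit]
    have s1 := profLe_concat (A.acc v.1) hlen1 hle2
    have s2 := profLe_concat (A.acc v.1) hlen2 hle3
    rcases s1 with e1 | l1
    · rw [e1]; exact s2
    · rcases s2 with e2 | l2
      · rw [← e2]; exact Or.inr l1
      · have ht : (A.profileOf q u.2 ++ [A.acc v.1]) < (h u ++ [A.acc v.1]) :=
          lt_trans (show _ < _ from l1) (show _ < _ from l2)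
        exact Or.inr ht
  exact profLe_antisymm hle4 hle1

/-- Every node at level `n+1` has a `G'`-parent at level `n`. -/
lemma exists_parent' [Fintype Q] {x : Q × ℕ} (hx : A.InDag w x) {n : ℕ} (hn : x.2 = n + 1) :
    ∃ y : Q × ℕ, y.2 = n ∧ A.Edge' w h y x := by
  classical
  obtain ⟨p, hp0, hptr, hpx⟩ := hx
  have hedge0 : A.Edge w (p n, n) x := by
    refine ⟨⟨p, hp0, fun j hj => hptr j (by omega), rfl⟩, hn, ?_⟩
    have := hptr n (by omega)
    rw [show n + 1 = x.2 by omega, hpx] at this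
    exact this
  let s : Finset Q := Finset.univ.filter (fun q => A.Edge w (q, n) x)
  have hsne : s.Nonempty := ⟨p n, by simp [s, hedge0]⟩
  obtain ⟨b, hbs, hbmax⟩ := s.exists_max_image (fun q => h (q, n)) hsne
  refine ⟨(b, n), rfl, (Finset.mem_filter.1 hbs).2, ?_⟩
  intro u' hu' hlt
  have hu'2 : u'.2 = n := by have := hu'.2.1; omega
  have hu'mem : u'.1 ∈ s := by
    simp only [s, Finset.mem_filter, Finset.mem_univ, true_and]
    have : (u'.1, n) = u' := by rw [← hu'2]
    rw [this]; exact hu'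
  have hle : h (u'.1, n) ≤ h (b, n) := hbmax u'.1 hu'mem
  have heq : (u'.1, n) = u' := by rw [← hu'2]
  rw [heq] at hle
  exact absurd hle (not_le_of_gt (show h (b, n) < h u' from hlt))

lemma alpha_le [Fintype Q] (hprof : A.IsProfileFun w h) (k : ℕ) (lam : Q × ℕ → Bool)
    (hlam : A.IsRetroLabeling w h k lam) {u v : Q × ℕ} (huv : A.Edge' w h u v)
    (hk : k < u.2) :
    A.alphaCount w h lam v ≤ A.alphaCount w h lam u := by
  classical
  have hv2 : v.2 = u.2 + 1 := huv.1.2.1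
  set Sv := {p : List Bool |
    ∃ x, A.InDag w x ∧ x.2 = v.2 ∧ lam x = true ∧ h x = p ∧ ProfLt (h v) p} with hSvdef
  set Su := {p : List Bool |
    ∃ y, A.InDag w y ∧ y.2 = u.2 ∧ lam y = true ∧ h y = p ∧ ProfLt (h u) p} with hSudef
  have key : ∀ p ∈ Sv, ∃ q ∈ Su, p = q ++ [false] := by
    rintro p ⟨x, hxdag, hx2, hxlam, rfl, hlt⟩
    have hxk : k < x.2 := by omega
    have hxacc : A.acc x.1 = false := by
      by_contra hb
      have hxf := hlam.2.1 x hxdag hxk (by simpa using hb)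
      rw [hxf] at hxlam
      exact Bool.noConfusion hxlam
    obtain ⟨y, hy2, hyx⟩ := exists_parent' (h := h) hxdag (n := u.2) (by omega)
    have hxy : h x = h y ++ [false] := by rw [h_edge' hprof hyx, hxacc]
    have hydag : A.InDag w y := hyx.1.1
    have hylam : lam y = true := by
      have hxe := hlam.2.2 y x hxk hxacc hyx
      rw [← hxe]; exact hxlam
    have hhv : h v = h u ++ [A.acc v.1] := h_edge' hprof huv
    have hlen : (h u).length = (h y).length := by
      rw [h_len hprof huv.1.1, h_len hprof hydag, hy2]
    have hlt' : ProfLt (h u) (h y) := by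
      rw [hhv, hxy] at hlt
      rcases (lex_concat_iff hlen).1 hlt with h1 | ⟨-, h2⟩
      · exact h1
      · simp [Bool.lt_iff] at h2
    exact ⟨h y, ⟨y, hydag, hy2, hylam, rfl, hlt'⟩, hxy⟩
  have hSufin : Su.Finite := by
    apply Set.Finite.subset (Set.finite_range (fun q : Q => h (q, u.2)))
    rintro p ⟨y, hydag, hy2, -, rfl, -⟩
    exact ⟨y.1, by rw [← hy2]⟩
  show Sv.ncard ≤ Su.ncard
  refine Set.ncard_le_ncard_of_injOn (fun p => p.dropLast) ?_ ?_ hSufin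
  · intro p hp
    obtain ⟨q, hq, rfl⟩ := key p hp
    simpa [List.dropLast_concat] using hq
  · intro p1 h1 p2 h2 hd
    obtain ⟨q1, -, rfl⟩ := key p1 h1
    obtain ⟨q2, -, rfl⟩ := key p2 h2
    simp only [List.dropLast_concat] at hd
    rw [hd]

lemma alpha_le_card [Fintype Q] (hprof : A.IsProfileFun w h) (k : ℕ) (lam : Q × ℕ → Bool)
    (hlam : A.IsRetroLabeling w h k lam) {v : Q × ℕ} (hvdag : A.InDag w v) (hk : k < v.2) :
    A.alphaCount w h lam v ≤ Finset.card (Finset.univ.filter fun q => A.acc q = false) ∧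
    (lam v = true →
      A.alphaCount w h lam v < Finset.card (Finset.univ.filter fun q => A.acc q = false)) := by
  classical
  set Sv := {p : List Bool |
    ∃ x, A.InDag w x ∧ x.2 = v.2 ∧ lam x = true ∧ h x = p ∧ ProfLt (h v) p} with hSvdef
  set T := (fun q : Q => h (q, v.2)) '' {q : Q | A.acc q = false} with hTdef
  have hTfin : T.Finite := (Set.toFinite _).image _
  have hsub : Sv ⊆ T := by
    rintro p ⟨x, hxdag, hx2, hxlam, rfl, -⟩
    have hxacc : A.acc x.1 = false := by
      by_contra hb
      have hxf := hlam.2.1 x hxdag (by omega) (by simpa using hb)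
      rw [hxf] at hxlam
      exact Bool.noConfusion hxlam
    exact ⟨x.1, hxacc, by rw [← hx2]⟩
  have hTcard : T.ncard ≤ Finset.card (Finset.univ.filter fun q => A.acc q = false) := by
    have h1 : T.ncard ≤ Set.ncard {q : Q | A.acc q = false} :=
      Set.ncard_image_le (Set.toFinite _)
    have h2 : {q : Q | A.acc q = false} =
        ↑(Finset.univ.filter fun q => A.acc q = false) := by ext q; simp
    rw [h2, Set.ncard_coe_finset] at h1
    exact h1
  constructor
  · exact le_trans (Set.ncard_le_ncard hsub hTfin) hTcard
  · intro hvlam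
    have hvacc : A.acc v.1 = false := by
      by_contra hb
      have hxf := hlam.2.1 v hvdag hk (by simpa using hb)
      rw [hxf] at hvlam
      exact Bool.noConfusion hvlam
    have hvT : h v ∈ T := ⟨v.1, hvacc, by show h (v.1, v.2) = h v; rw [Prod.mk.eta]⟩
    have hnotmem : h v ∉ Sv := by
      rintro ⟨x, -, -, -, hx, hlt⟩
      exact profLt_asymm hlt hlt
    have hins : insert (h v) Sv ⊆ T := Set.insert_subset hvT hsub
    have hSvfin : Sv.Finite := hTfin.subset hsub
    have : (insert (h v) Sv).ncard ≤ T.ncard := Set.ncard_le_ncard hins hTfin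
    rw [Set.ncard_insert_of_notMem hnotmem hSvfin] at this
    have := le_trans this hTcard
    show Sv.ncard < _
    omega

end Aux


/-- the `k`-retrospective ranking is non-increasing along `G'`-edges. -/
theorem stmt14 {Q σ : Type} [Fintype Q] (A : NBW Q σ) (w : ℕ → σ) (h : Q × ℕ → List Bool)
    (hprof : A.IsProfileFun w h) (k : ℕ) (lam : Q × ℕ → Bool)
    (hlam : A.IsRetroLabeling w h k lam)
    (u v : Q × ℕ) (huv : A.Edge' w h u v) :
    A.retroRank w h lam k (A.mBound) v ≤ A.retroRank w h lam k (A.mBound) u := by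
  classical
  have hv2 : v.2 = u.2 + 1 := huv.1.2.1
  have hudag : A.InDag w u := huv.1.1
  have hvdag : A.InDag w v := inDag_of_edge_right huv.1
  unfold NBW.retroRank NBW.mBound
  by_cases hvk : v.2 ≤ k
  · have huk : u.2 ≤ k := by omega
    rw [if_pos hvk, if_pos huk]
  · push_neg at hvk
    rw [if_neg (show ¬ v.2 ≤ k by omega)]
    obtain ⟨hb1, hb2⟩ := alpha_le_card hprof k lam hlam hvdag hvk
    by_cases huk : u.2 ≤ k
    · rw [if_pos huk]
      by_cases hvl : lam v = true
      · rw [if_pos hvl]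
        have := hb2 hvl
        omega
      · rw [if_neg hvl]
        omega
    · push_neg at huk
      rw [if_neg (show ¬ u.2 ≤ k by omega)]
      have hα := alpha_le hprof k lam hlam huv huk
      by_cases hvl : lam v = true
      · have hvacc : A.acc v.1 = false := by
          by_contra hb
          have hxf := hlam.2.1 v hvdag hvk (by simpa using hb)
          rw [hxf] at hvl
          exact Bool.noConfusion hvl
        have hul : lam u = true := by
          have hxe := hlam.2.2 u v hvk hvacc huv
          rw [← hxe]; exact hvl
        rw [if_pos hvl, if_pos hul]
        omega
      · rw [if_neg hvl]
        by_cases hul : lam u = true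
        · rw [if_pos hul]; omega
        · rw [if_neg hul]; omega
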